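/- With L_nice, m_nice, r_nice as defined from the typed instance, the inequality ⌈L_nice/T⌉ ≥ m_nice holds (ceilings of real numbers, taken in ℕ). (This is the strengthened statement proved inside Lemma 2.) -/

import Mathlib

open Finset

variable {ι : Type*} [DecidableEq ι]

/-- The set of classes of a given type (types ①–⑧ are indexed by `Fin 8`,
with `0 ↔ ①`, `1 ↔ ②`, `2 ↔ ③`, `3 ↔ ④`, `4 ↔ ⑤`, `5 ↔ ⑥`, `6 ↔ ⑦`, `7 ↔ ⑧`). -/
def typeSet (C : Finset ι) (typ : ι → Fin 8) (k : Fin 8) : Finset ι :=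
  C.filter fun i => typ i = k

/-- `α'_i = ⌊P_i/(T - s_i)⌋` (floor of a real, taken in ℕ). -/
noncomputable def alpha' (T : ℝ) (s P : ι → ℝ) (i : ι) : ℕ :=
  ⌊P i / (T - s i)⌋₊

/-- `α_i = ⌈P_i/(T - s_i)⌉` (ceiling of a real, taken in ℕ). -/
noncomputable def alphaCeil (T : ℝ) (s P : ι → ℝ) (i : ι) : ℕ :=
  ⌈P i / (T - s i)⌉₊

/-- The obligatory load `L_nice` of a nice instance. -/
noncomputable def Lnice (T : ℝ) (C : Finset ι) (s P : ι → ℝ) (typ : ι → Fin 8) : ℝ :=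
  (∑ i ∈ typeSet C typ 0 ∪ typeSet C typ 1, (alpha' T s P i : ℝ) * s i)
    + (∑ i ∈ typeSet C typ 2, 2 * s i)
    + (∑ i ∈ typeSet C typ 3 ∪ typeSet C typ 4 ∪ typeSet C typ 5 ∪ typeSet C typ 6
        ∪ typeSet C typ 7, s i)
    + ∑ i ∈ C, P i

/-- The residual load `r_nice`. -/
noncomputable def rnice (C : Finset ι) (s P : ι → ℝ) (typ : ι → Fin 8)
    (R3 R5 R6 : Finset ι) : ℝ :=
  (∑ i ∈ R3, (2 * s i + P i))
    + ∑ i ∈ R5 ∪ R6 ∪ typeSet C typ 6 ∪ typeSet C typ 7, (s i + P i)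

/-- The machine lower bound `m_nice`. -/
noncomputable def mnice (T : ℝ) (C : Finset ι) (s P : ι → ℝ) (typ : ι → Fin 8)
    (R3 R5 R6 : Finset ι) : ℕ :=
  (∑ i ∈ typeSet C typ 0 ∪ typeSet C typ 1, alpha' T s P i)
    + 3 * ((typeSet C typ 2).card / 2)
    + (typeSet C typ 3).card
    + (typeSet C typ 4).card / 2
    + (typeSet C typ 5).card / 3
    + ⌈rnice C s P typ R3 R5 R6 / T⌉₊

/-- the strengthened claim proved inside Lemma 2:
`⌈L_nice/T⌉ ≥ m_nice`. -/

private lemma sum_ge_card_mul {ι : Type*} (s : Finset ι) (f : ι → ℝ) (b : ℝ)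
    (h : ∀ i ∈ s, b ≤ f i) : (s.card : ℝ) * b ≤ ∑ i ∈ s, f i := by
  simpa [nsmul_eq_mul] using Finset.card_nsmul_le_sum s f b h

theorem stmt_1 (T : ℝ) (hT : 0 < T) (m : ℕ) (hm : 1 ≤ m)
    (C : Finset ι) (s P : ι → ℝ) (typ : ι → Fin 8)
    (hs : ∀ i ∈ C, 0 ≤ s i ∧ s i < T) (hP : ∀ i ∈ C, 0 < P i)
    (h1 : ∀ i ∈ C, typ i = 0 →
      2 * T / 3 ≤ s i ∧ T ≤ s i + P i ∧ s i + P i ≤ (m : ℝ) * T)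
    (h2 : ∀ i ∈ C, typ i = 1 →
      T / 3 ≤ s i ∧ s i < 2 * T / 3 ∧ 2 * T - s i ≤ s i + P i ∧ s i + P i ≤ (m : ℝ) * T)
    (h3 : ∀ i ∈ C, typ i = 2 →
      T / 3 ≤ s i ∧ s i < 2 * T / 3 ∧ 4 * T / 3 < s i + P i ∧ s i + P i < 2 * T - s i)
    (h4 : ∀ i ∈ C, typ i = 3 →
      T / 3 ≤ s i ∧ s i < 2 * T / 3 ∧ T ≤ s i + P i ∧ s i + P i ≤ 4 * T / 3)
    (h5 : ∀ i ∈ C, typ i = 4 →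
      T / 3 ≤ s i ∧ s i < 2 * T / 3 ∧ T / 2 < s i + P i ∧ s i + P i ≤ 2 * T / 3)
    (h6 : ∀ i ∈ C, typ i = 5 →
      T / 3 ≤ s i ∧ s i < 2 * T / 3 ∧ T / 3 < s i + P i ∧ s i + P i ≤ 4 * T / 9)
    (h7 : ∀ i ∈ C, typ i = 6 → 0 ≤ s i ∧ s i < T / 3)
    (h8 : ∀ i ∈ C, typ i = 7 →
      T / 3 ≤ s i ∧ s i < 2 * T / 3 ∧ 4 * T / 9 < s i + P i ∧ s i + P i ≤ T / 2)
    (R3 R5 R6 : Finset ι)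
    (hR3 : R3 ⊆ typeSet C typ 2)
    (hR3card : R3.card = (typeSet C typ 2).card - 2 * ((typeSet C typ 2).card / 2))
    (hR5 : R5 ⊆ typeSet C typ 4)
    (hR5card : R5.card = (typeSet C typ 4).card - 2 * ((typeSet C typ 4).card / 2))
    (hR6 : R6 ⊆ typeSet C typ 5)
    (hR6card : R6.card = (typeSet C typ 5).card - 3 * ((typeSet C typ 5).card / 3))
    : ⌈Lnice T C s P typ / T⌉₊ ≥ mnice T C s P typ R3 R5 R6 := by
  classical
  set S0 := typeSet C typ 0 with hS0
  set S1 := typeSet C typ 1 with hS1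
  set S2 := typeSet C typ 2 with hS2
  set S3 := typeSet C typ 3 with hS3
  set S4 := typeSet C typ 4 with hS4
  set S5 := typeSet C typ 5 with hS5
  set S6 := typeSet C typ 6 with hS6
  set S7 := typeSet C typ 7 with hS7
  have hmem : ∀ (k : Fin 8) (i : ι), i ∈ typeSet C typ k → i ∈ C ∧ typ i = k := by
    intro k i hi; exact Finset.mem_filter.mp hi
  have hdisj : ∀ j k : Fin 8, j ≠ k → Disjoint (typeSet C typ j) (typeSet C typ k) := by
    intro j k hjk
    rw [Finset.disjoint_left]
    intro i hij hik
    obtain ⟨-, e1⟩ := hmem j i hij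
    obtain ⟨-, e2⟩ := hmem k i hik
    exact hjk (e1 ▸ e2 ▸ rfl)
  have hPsum : ∑ i ∈ C, P i = ∑ k : Fin 8, ∑ i ∈ typeSet C typ k, P i :=
    (Finset.sum_fiberwise C typ P).symm
  have h01 : Disjoint S0 S1 := hdisj 0 1 (by decide)
  have h34 : Disjoint S3 S4 := hdisj 3 4 (by decide)
  have h345 : Disjoint (S3 ∪ S4) S5 :=
    Finset.disjoint_union_left.mpr ⟨hdisj 3 5 (by decide), hdisj 4 5 (by decide)⟩
  have h3456 : Disjoint (S3 ∪ S4 ∪ S5) S6 :=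
    Finset.disjoint_union_left.mpr ⟨Finset.disjoint_union_left.mpr
      ⟨hdisj 3 6 (by decide), hdisj 4 6 (by decide)⟩, hdisj 5 6 (by decide)⟩
  have h34567 : Disjoint (S3 ∪ S4 ∪ S5 ∪ S6) S7 :=
    Finset.disjoint_union_left.mpr ⟨Finset.disjoint_union_left.mpr
      ⟨Finset.disjoint_union_left.mpr ⟨hdisj 3 7 (by decide), hdisj 4 7 (by decide)⟩,
        hdisj 5 7 (by decide)⟩, hdisj 6 7 (by decide)⟩
  have hL : Lnice T C s P typ =
      (∑ i ∈ S0, ((alpha' T s P i : ℝ) * s i + P i))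
      + (∑ i ∈ S1, ((alpha' T s P i : ℝ) * s i + P i))
      + (∑ i ∈ S2, (2 * s i + P i))
      + (∑ i ∈ S3, (s i + P i))
      + (∑ i ∈ S4, (s i + P i))
      + (∑ i ∈ S5, (s i + P i))
      + (∑ i ∈ S6, (s i + P i))
      + (∑ i ∈ S7, (s i + P i)) := by
    unfold Lnice
    rw [hPsum, Fin.sum_univ_eight]
    rw [← hS0, ← hS1, ← hS2, ← hS3, ← hS4, ← hS5, ← hS6, ← hS7]
    rw [Finset.sum_union h01, Finset.sum_union h34567, Finset.sum_union h3456,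
        Finset.sum_union h345, Finset.sum_union h34]
    simp only [Finset.sum_add_distrib]
    ring
  have hsub3 : R3 ⊆ C := hR3.trans (Finset.filter_subset _ _)
  have hsub5 : R5 ⊆ C := hR5.trans (Finset.filter_subset _ _)
  have hsub6 : R6 ⊆ C := hR6.trans (Finset.filter_subset _ _)
  have hd56 : Disjoint R5 R6 := (hdisj 4 5 (by decide)).mono hR5 hR6
  have hd566 : Disjoint (R5 ∪ R6) S6 :=
    Finset.disjoint_union_left.mpr ⟨(hdisj 4 6 (by decide)).mono hR5 le_rfl,
      (hdisj 5 6 (by decide)).mono hR6 le_rfl⟩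
  have hd5667 : Disjoint (R5 ∪ R6 ∪ S6) S7 :=
    Finset.disjoint_union_left.mpr ⟨Finset.disjoint_union_left.mpr
      ⟨(hdisj 4 7 (by decide)).mono hR5 le_rfl, (hdisj 5 7 (by decide)).mono hR6 le_rfl⟩,
      hdisj 6 7 (by decide)⟩
  have hrsplit : rnice C s P typ R3 R5 R6 =
      (∑ i ∈ R3, (2 * s i + P i)) + (∑ i ∈ R5, (s i + P i)) + (∑ i ∈ R6, (s i + P i))
      + (∑ i ∈ S6, (s i + P i)) + (∑ i ∈ S7, (s i + P i)) := by
    unfold rnice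
    rw [← hS6, ← hS7, Finset.sum_union hd5667, Finset.sum_union hd566,
        Finset.sum_union hd56]
    ring
  have hr0 : 0 ≤ rnice C s P typ R3 R5 R6 := by
    rw [hrsplit]
    have t1 : ∀ i ∈ C, (0:ℝ) ≤ 2 * s i + P i := fun i hi => by
      have := (hs i hi).1; have := hP i hi; linarith
    have t2 : ∀ i ∈ C, (0:ℝ) ≤ s i + P i := fun i hi => by
      have := (hs i hi).1; have := hP i hi; linarith
    have q1 := Finset.sum_nonneg fun i hi => t1 i (hsub3 hi)
    have q2 := Finset.sum_nonneg fun i hi => t2 i (hsub5 hi)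
    have q3 := Finset.sum_nonneg fun i hi => t2 i (hsub6 hi)
    have q4 := Finset.sum_nonneg fun i hi => t2 i ((hmem 6 i hi).1)
    have q5 := Finset.sum_nonneg fun i hi => t2 i ((hmem 7 i hi).1)
    linarith
  -- types ①, ② : pointwise α'·T ≤ α'·s + P
  have hαT : ∀ (k : Fin 8) (i : ι), i ∈ typeSet C typ k →
      (alpha' T s P i : ℝ) * T ≤ (alpha' T s P i : ℝ) * s i + P i := by
    intro k i hi
    obtain ⟨hiC, -⟩ := hmem k i hi
    have hsi := hs i hiC
    have hPi := hP i hiC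
    have hts : 0 < T - s i := by linarith [hsi.2]
    have hfl : (alpha' T s P i : ℝ) ≤ P i / (T - s i) :=
      Nat.floor_le (by positivity)
    have hmul : (alpha' T s P i : ℝ) * (T - s i) ≤ P i := by
      rw [← le_div_iff₀ hts]; exact hfl
    nlinarith
  have B0 : (∑ i ∈ S0, (alpha' T s P i : ℝ)) * T ≤
      ∑ i ∈ S0, ((alpha' T s P i : ℝ) * s i + P i) := by
    rw [Finset.sum_mul]
    exact Finset.sum_le_sum fun i hi => hαT 0 i hi
  have B1 : (∑ i ∈ S1, (alpha' T s P i : ℝ)) * T ≤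
      ∑ i ∈ S1, ((alpha' T s P i : ℝ) * s i + P i) := by
    rw [Finset.sum_mul]
    exact Finset.sum_le_sum fun i hi => hαT 1 i hi
  -- type ③
  have hc2 : (S2 \ R3).card = 2 * (S2.card / 2) := by
    rw [Finset.card_sdiff_of_subset hR3, hR3card]; omega
  have B2 : 3 * ((S2.card / 2 : ℕ) : ℝ) * T + (∑ i ∈ R3, (2 * s i + P i)) ≤
      ∑ i ∈ S2, (2 * s i + P i) := by
    rw [← Finset.sum_sdiff hR3]
    have each : ∀ i ∈ S2 \ R3, 3 * T / 2 ≤ 2 * s i + P i := by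
      intro i hi
      have hi2 : i ∈ S2 := (Finset.sdiff_subset) hi
      obtain ⟨hiC, e⟩ := hmem 2 i hi2
      obtain ⟨hs1, hs2, hsp1, hsp2⟩ := h3 i hiC e
      linarith
    have hsum := sum_ge_card_mul (S2 \ R3) _ (3 * T / 2) each
    rw [hc2] at hsum
    push_cast at hsum ⊢
    linarith
  -- type ④
  have B3 : (S3.card : ℝ) * T ≤ ∑ i ∈ S3, (s i + P i) := by
    apply sum_ge_card_mul
    intro i hi
    obtain ⟨hiC, e⟩ := hmem 3 i hi
    obtain ⟨-, -, hsp1, -⟩ := h4 i hiC e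
    linarith
  -- type ⑤
  have hc4 : (S4 \ R5).card = 2 * (S4.card / 2) := by
    rw [Finset.card_sdiff_of_subset hR5, hR5card]; omega
  have B4 : ((S4.card / 2 : ℕ) : ℝ) * T + (∑ i ∈ R5, (s i + P i)) ≤
      ∑ i ∈ S4, (s i + P i) := by
    rw [← Finset.sum_sdiff hR5]
    have each : ∀ i ∈ S4 \ R5, T / 2 ≤ s i + P i := by
      intro i hi
      have hi4 : i ∈ S4 := (Finset.sdiff_subset) hi
      obtain ⟨hiC, e⟩ := hmem 4 i hi4
      obtain ⟨-, -, hsp1, -⟩ := h5 i hiC e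
      linarith
    have hsum := sum_ge_card_mul (S4 \ R5) _ (T / 2) each
    rw [hc4] at hsum
    push_cast at hsum ⊢
    linarith
  -- type ⑥
  have hc5 : (S5 \ R6).card = 3 * (S5.card / 3) := by
    rw [Finset.card_sdiff_of_subset hR6, hR6card]; omega
  have B5 : ((S5.card / 3 : ℕ) : ℝ) * T + (∑ i ∈ R6, (s i + P i)) ≤
      ∑ i ∈ S5, (s i + P i) := by
    rw [← Finset.sum_sdiff hR6]
    have each : ∀ i ∈ S5 \ R6, T / 3 ≤ s i + P i := by
      intro i hi
      have hi5 : i ∈ S5 := (Finset.sdiff_subset) hi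
      obtain ⟨hiC, e⟩ := hmem 5 i hi5
      obtain ⟨-, -, hsp1, -⟩ := h6 i hiC e
      linarith
    have hsum := sum_ge_card_mul (S5 \ R6) _ (T / 3) each
    rw [hc5] at hsum
    push_cast at hsum ⊢
    linarith
  -- assemble the key inequality
  set N : ℕ := (∑ i ∈ S0 ∪ S1, alpha' T s P i) + 3 * (S2.card / 2) + S3.card
      + S4.card / 2 + S5.card / 3 with hN
  have key : (N : ℝ) * T + rnice C s P typ R3 R5 R6 ≤ Lnice T C s P typ := by
    rw [hL, hrsplit, hN]
    rw [Finset.sum_union h01]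
    push_cast
    linarith [B0, B1, B2, B3, B4, B5]
  have hdiv : rnice C s P typ R3 R5 R6 / T + (N : ℝ) ≤ Lnice T C s P typ / T := by
    rw [div_add' _ _ _ hT.ne']
    gcongr
    linarith
  have hre : mnice T C s P typ R3 R5 R6 = N + ⌈rnice C s P typ R3 R5 R6 / T⌉₊ := by
    unfold mnice
    rw [hN, ← hS0, ← hS1, ← hS2, ← hS3, ← hS4, ← hS5]
  have hr0T : 0 ≤ rnice C s P typ R3 R5 R6 / T := div_nonneg hr0 hT.le
  calc mnice T C s P typ R3 R5 R6
      = ⌈rnice C s P typ R3 R5 R6 / T⌉₊ + N := by rw [hre]; omega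
    _ = ⌈rnice C s P typ R3 R5 R6 / T + (N : ℝ)⌉₊ := (Nat.ceil_add_natCast hr0T N).symm
    _ ≤ ⌈Lnice T C s P typ / T⌉₊ := Nat.ceil_le_ceil hdiv
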